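/- The polynomial x^7 + 7x^4 - x + 7 is irreducible over ℚ. -/

import Mathlib

open Polynomial

private lemma not_dvd_of_rem' {K : Type*} [Field K] {q p s r : K[X]}
    (h : p = q * s + r) (hr : r ≠ 0) (hdeg : r.degree < q.degree) : ¬ q ∣ p := by
  rintro ⟨c, hc⟩
  have hqr : q ∣ r := ⟨c - s, by rw [mul_sub, ← hc, h]; ring⟩
  exact hr (Polynomial.eq_zero_of_dvd_of_degree_lt hqr hdeg)

private lemma irred_aux' {K : Type*} [Field K] {p : K[X]} (hm : p.Monic)
    (h2 : 2 ≤ p.natDegree) (h5 : p.natDegree ≤ 5)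
    (hroot : ∀ x : K, p.eval x ≠ 0)
    (hquad : ∀ a b : K, (∀ x : K, x ^ 2 + a * x + b ≠ 0) → ¬ (X ^ 2 + C a * X + C b ∣ p)) :
    Irreducible p := by
  have hp1 : p ≠ 1 := by
    intro h; rw [h, natDegree_one] at h2; omega
  rw [hm.irreducible_iff_lt_natDegree_lt hp1]
  intro q hq hdq hdvd
  rw [Finset.mem_Ioc] at hdq
  have hd12 : q.natDegree = 1 ∨ q.natDegree = 2 := by omega
  rcases hd12 with hd1 | hd2
  · have hqeq := hq.eq_X_add_C hd1
    have : p.IsRoot (-(q.coeff 0)) := by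
      have : q.IsRoot (-(q.coeff 0)) := by
        rw [hqeq]; simp [IsRoot]
      exact this.dvd hdvd
    exact hroot _ this
  · by_cases hr : ∃ x, q.eval x = 0
    · obtain ⟨x, hx⟩ := hr
      have : p.IsRoot x := (IsRoot.def.mpr hx).dvd hdvd
      exact hroot _ this
    · push_neg at hr
      have hq0 : q ≠ 0 := hq.ne_zero
      have hdeg2 : q.degree = 2 := by rw [degree_eq_natDegree hq0, hd2]; rfl
      have e1 : q.degree = (X ^ 2 : K[X]).degree := by rw [hdeg2, degree_X_pow]; rfl
      have e2 : q.leadingCoeff = (X ^ 2 : K[X]).leadingCoeff := by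
        rw [hq.leadingCoeff, (monic_X_pow 2).leadingCoeff]
      have hsub : (q - X ^ 2).degree < 2 := by
        have := Polynomial.degree_sub_lt e1 hq0 e2
        rwa [hdeg2] at this
      have hle1 : (q - X ^ 2).degree ≤ 1 := by
        by_cases h0 : q - X ^ 2 = 0
        · simp [h0]
        · rw [degree_eq_natDegree h0] at hsub ⊢
          exact_mod_cast Nat.lt_succ_iff.mp (by exact_mod_cast hsub)
      have hqeq : q = X ^ 2 + C ((q - X ^ 2).coeff 1) * X + C ((q - X ^ 2).coeff 0) := by
        have h := eq_X_add_C_of_degree_le_one hle1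
        rw [add_assoc, ← h]; ring
      refine hquad _ _ ?_ (hqeq ▸ hdvd)
      intro x hx
      apply hr x
      rw [hqeq]
      simpa using hx

private lemma irredQ2' : Irreducible (X ^ 5 + X ^ 3 + X ^ 2 + X + 1 : (ZMod 2)[X]) := by
  have hdeg : (X ^ 5 + X ^ 3 + X ^ 2 + X + 1 : (ZMod 2)[X]).natDegree = 5 := by
    compute_degree!
  apply irred_aux' (by monicity!) (by omega) (by omega)
  · intro x
    have hx := (by decide : ∀ y : ZMod 2, y = 0 ∨ y = 1) x
    rcases hx with rfl | rfl <;> simp <;> decide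
  · intro a b hnr
    have key : ∀ a b : ZMod 2, (0:ZMod 2) ^ 2 + a * 0 + b ≠ 0 →
        (1:ZMod 2) ^ 2 + a * 1 + b ≠ 0 → a = 1 ∧ b = 1 := by decide
    obtain ⟨rfl, rfl⟩ := key a b (hnr 0) (hnr 1)
    simp only [C_1]
    exact not_dvd_of_rem' (s := X ^ 3 - X ^ 2 + X + 1) (r := -X) (by ring)
      (by simp [X_ne_zero])
      (by rw [show (-X : (ZMod 2)[X]).degree = 1 from by compute_degree!,
              show (X ^ 2 + 1 * X + 1 : (ZMod 2)[X]).degree = 2 from by compute_degree!]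
          decide)

private lemma irredB' : Irreducible (X ^ 4 + X ^ 3 + 2 * X ^ 2 + 2 * X + 2 : (ZMod 3)[X]) := by
  have hdeg : (X ^ 4 + X ^ 3 + 2 * X ^ 2 + 2 * X + 2 : (ZMod 3)[X]).natDegree = 4 := by
    compute_degree!
  apply irred_aux' (by monicity!) (by omega) (by omega)
  · intro x
    have hx := (by decide : ∀ y : ZMod 3, y = 0 ∨ y = 1 ∨ y = 2) x
    rcases hx with rfl | rfl | rfl <;> simp <;> decide
  · intro a b hnr
    have key : ∀ a b : ZMod 3, (0:ZMod 3) ^ 2 + a * 0 + b ≠ 0 →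
        (1:ZMod 3) ^ 2 + a * 1 + b ≠ 0 → (2:ZMod 3) ^ 2 + a * 2 + b ≠ 0 →
        (a = 0 ∧ b = 1) ∨ (a = 1 ∧ b = 2) ∨ (a = 2 ∧ b = 2) := by decide
    have h2 : (C (2 : ZMod 3) : (ZMod 3)[X]) = 2 := map_ofNat C 2
    rcases key a b (hnr 0) (hnr 1) (hnr 2) with ⟨rfl, rfl⟩ | ⟨rfl, rfl⟩ | ⟨rfl, rfl⟩
    · simp only [C_1, C_0]
      exact not_dvd_of_rem' (s := X ^ 2 + X + 1) (r := X + 1) (by ring)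
        (by intro h; simpa using congrArg (eval 0) h)
        (by rw [show (X + 1 : (ZMod 3)[X]).degree = 1 from by compute_degree!,
                show (X ^ 2 + 0 * X + 1 : (ZMod 3)[X]).degree = 2 from by compute_degree!]
            decide)
    · simp only [C_1, h2]
      exact not_dvd_of_rem' (s := X ^ 2) (r := 2 * X + 2) (by ring)
        (by intro h
            apply (by decide : (2 : ZMod 3) ≠ 0)
            simpa using congrArg (eval 0) h)
        (by rw [show (2 * X + 2 : (ZMod 3)[X]).degree = 1 from by compute_degree!,
                show (X ^ 2 + 1 * X + 2 : (ZMod 3)[X]).degree = 2 from by compute_degree!]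
            decide)
    · simp only [h2]
      exact not_dvd_of_rem' (s := X ^ 2 - X + 2) (r := -2) (by ring)
        (by intro h
            apply (by decide : (-2 : ZMod 3) ≠ 0)
            simpa using congrArg (eval 0) h)
        (by rw [show (-2 : (ZMod 3)[X]).degree = 0 from by compute_degree!,
                show (X ^ 2 + 2 * X + 2 : (ZMod 3)[X]).degree = 2 from by compute_degree!]
            decide)

private lemma irredA' : Irreducible (X ^ 3 + 2 * X ^ 2 + 2 * X + 2 : (ZMod 3)[X]) := by
  have hdeg : (X ^ 3 + 2 * X ^ 2 + 2 * X + 2 : (ZMod 3)[X]).natDegree = 3 := by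
    compute_degree!
  have hm : (X ^ 3 + 2 * X ^ 2 + 2 * X + 2 : (ZMod 3)[X]).Monic := by monicity!
  rw [hm.irreducible_iff_roots_eq_zero_of_degree_le_three (by omega) (by omega)]
  rw [Multiset.eq_zero_iff_forall_notMem]
  intro x hx
  rw [mem_roots hm.ne_zero] at hx
  have hx3 := (by decide : ∀ y : ZMod 3, y = 0 ∨ y = 1 ∨ y = 2) x
  rw [IsRoot.def] at hx
  have hx2 := hx
  rcases hx3 with rfl | rfl | rfl <;> simp at hx2 <;> revert hx2 <;> decide

private lemma lc_map_ne_zero' {R : Type*} [CommRing R] [Nontrivial R] (φ : ℤ →+* R)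
    {k : ℤ[X]} (hk : IsUnit k.leadingCoeff) : φ k.leadingCoeff ≠ 0 := by
  rcases Int.isUnit_iff.mp hk with h | h <;> rw [h] <;> simp

private lemma map_ne_zero' {R : Type*} [CommRing R] [Nontrivial R] (φ : ℤ →+* R)
    {k : ℤ[X]} (hk : IsUnit k.leadingCoeff) : k.map φ ≠ 0 := by
  intro h0
  apply lc_map_ne_zero' φ hk
  have : (k.map φ).coeff k.natDegree = φ (k.coeff k.natDegree) := coeff_map φ _
  rw [h0] at this
  simpa using this.symm

private lemma irredFZ : Irreducible (X ^ 7 + 7 * X ^ 4 - X + 7 : ℤ[X]) := by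
  set F : ℤ[X] := X ^ 7 + 7 * X ^ 4 - X + 7 with hF
  have hFm : F.Monic := by rw [hF]; monicity!
  have hF7 : F.natDegree = 7 := by rw [hF]; compute_degree!
  constructor
  · intro hu; have := natDegree_eq_zero_of_isUnit hu; omega
  · intro g h hgh
    by_contra hcon
    push_neg at hcon
    obtain ⟨hgU, hhU⟩ := hcon
    have hg0 : g ≠ 0 := by rintro rfl; rw [zero_mul] at hgh; exact hFm.ne_zero hgh
    have hh0 : h ≠ 0 := by rintro rfl; rw [mul_zero] at hgh; exact hFm.ne_zero hgh
    have hlc : g.leadingCoeff * h.leadingCoeff = 1 := by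
      have := hFm
      rw [Monic, hgh, leadingCoeff_mul] at this
      exact this
    have hgu : IsUnit g.leadingCoeff := IsUnit.of_mul_eq_one _ hlc
    have hhu : IsUnit h.leadingCoeff := IsUnit.of_mul_eq_one _ (by rwa [mul_comm] at hlc)
    have hsum : g.natDegree + h.natDegree = 7 := by
      rw [← hF7, hgh, natDegree_mul hg0 hh0]
    have hunit : ∀ k : ℤ[X], IsUnit k.leadingCoeff → k.natDegree = 0 → IsUnit k := by
      intro k hk h0
      obtain ⟨a, rfl⟩ := natDegree_eq_zero.mp h0
      rw [leadingCoeff_C] at hk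
      exact isUnit_C.mpr hk
    -- reduction mod 2
    have hd25 : g.natDegree ≤ 2 ∨ 5 ≤ g.natDegree := by
      set φ : ℤ →+* ZMod 2 := Int.castRingHom (ZMod 2)
      set Q : (ZMod 2)[X] := X ^ 5 + X ^ 3 + X ^ 2 + X + 1 with hQ
      have hQ5 : Q.natDegree = 5 := by rw [hQ]; compute_degree!
      have h2z : (2 : (ZMod 2)[X]) = 0 := by
        rw [← map_ofNat (C : ZMod 2 →+* (ZMod 2)[X]) 2, show (2 : ZMod 2) = 0 from rfl, map_zero]
      have hmap2 : F.map φ = (X + 1) ^ 2 * Q := by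
        have hFd : F = (X + 1) ^ 2 * (X ^ 5 + X ^ 3 + X ^ 2 + X + 1)
            + 2 * (3 - 2 * X - 2 * X ^ 2 - 2 * X ^ 3 + 2 * X ^ 4 - X ^ 5 - X ^ 6) := by
          rw [hF]; ring
        rw [hFd]
        simp only [Polynomial.map_add, Polynomial.map_mul, Polynomial.map_pow,
          Polynomial.map_ofNat, Polynomial.map_one, Polynomial.map_X, Polynomial.map_sub]
        rw [h2z, hQ]; ring
      have hQdvd : Q ∣ (g.map φ) * (h.map φ) := by
        rw [← Polynomial.map_mul, ← hgh, hmap2]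
        exact dvd_mul_left _ _
      have hQp : Prime Q := UniqueFactorizationMonoid.irreducible_iff_prime.mp irredQ2'
      have hdg : (g.map φ).natDegree = g.natDegree :=
        natDegree_map_of_leadingCoeff_ne_zero φ (lc_map_ne_zero' φ hgu)
      have hdh : (h.map φ).natDegree = h.natDegree :=
        natDegree_map_of_leadingCoeff_ne_zero φ (lc_map_ne_zero' φ hhu)
      rcases hQp.2.2 _ _ hQdvd with hQg | hQh
      · right
        have := natDegree_le_of_dvd hQg (map_ne_zero' φ hgu)
        omega
      · left
        have := natDegree_le_of_dvd hQh (map_ne_zero' φ hhu)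
        omega
    -- reduction mod 3
    set ψ : ℤ →+* ZMod 3 := Int.castRingHom (ZMod 3)
    set A : (ZMod 3)[X] := X ^ 3 + 2 * X ^ 2 + 2 * X + 2 with hA
    set B : (ZMod 3)[X] := X ^ 4 + X ^ 3 + 2 * X ^ 2 + 2 * X + 2 with hB
    have hA3 : A.natDegree = 3 := by rw [hA]; compute_degree!
    have hB4 : B.natDegree = 4 := by rw [hB]; compute_degree!
    have hA0 : A ≠ 0 := by
      intro h0; rw [h0] at hA3; simp at hA3
    have hB0 : B ≠ 0 := by
      intro h0; rw [h0] at hB4; simp at hB4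
    have h3z : (3 : (ZMod 3)[X]) = 0 := by
      rw [← map_ofNat (C : ZMod 3 →+* (ZMod 3)[X]) 3, show (3 : ZMod 3) = 0 from rfl, map_zero]
    have hmap3 : F.map ψ = A * B := by
      have hFd : F = (X ^ 3 + 2 * X ^ 2 + 2 * X + 2) * (X ^ 4 + X ^ 3 + 2 * X ^ 2 + 2 * X + 2)
          + 3 * (1 - 3 * X - 4 * X ^ 2 - 4 * X ^ 3 - X ^ 4 - 2 * X ^ 5 - X ^ 6) := by
        rw [hF]; ring
      rw [hFd]
      simp only [Polynomial.map_add, Polynomial.map_mul, Polynomial.map_pow,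
        Polynomial.map_ofNat, Polynomial.map_one, Polynomial.map_X, Polynomial.map_sub]
      rw [h3z, hA, hB]; ring
    have hABdvd : F.map ψ = (g.map ψ) * (h.map ψ) := by
      rw [← Polynomial.map_mul, hgh]
    have hAp : Prime A := UniqueFactorizationMonoid.irreducible_iff_prime.mp irredA'
    have hBp : Prime B := UniqueFactorizationMonoid.irreducible_iff_prime.mp irredB'
    have hdg : (g.map ψ).natDegree = g.natDegree :=
      natDegree_map_of_leadingCoeff_ne_zero ψ (lc_map_ne_zero' ψ hgu)
    have hdh : (h.map ψ).natDegree = h.natDegree :=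
      natDegree_map_of_leadingCoeff_ne_zero ψ (lc_map_ne_zero' ψ hhu)
    have hg3 : g.map ψ ≠ 0 := map_ne_zero' ψ hgu
    have hh3 : h.map ψ ≠ 0 := map_ne_zero' ψ hhu
    have hAd : A ∣ (g.map ψ) * (h.map ψ) := by rw [← hABdvd, hmap3]; exact dvd_mul_right _ _
    have hBd : B ∣ (g.map ψ) * (h.map ψ) := by rw [← hABdvd, hmap3]; exact dvd_mul_left _ _
    -- helper: if both A and B divide k, then 7 ≤ natDegree k
    have hboth : ∀ k : (ZMod 3)[X], k ≠ 0 → A ∣ k → B ∣ k → 7 ≤ k.natDegree := by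
      intro k hk0 ⟨t, ht⟩ hBk
      have ht0 : t ≠ 0 := by rintro rfl; rw [mul_zero] at ht; exact hk0 ht
      have hBt : B ∣ t := by
        rcases hBp.2.2 _ _ (ht ▸ hBk) with hBA | hBt
        · have := natDegree_le_of_dvd hBA hA0
          omega
        · exact hBt
      have := natDegree_le_of_dvd hBt ht0
      rw [ht, natDegree_mul hA0 ht0]
      omega
    rcases hAp.2.2 _ _ hAd with hAg | hAh <;> rcases hBp.2.2 _ _ hBd with hBg | hBh
    · -- A, B ∣ g : g has degree 7, h is a unit
      have := hboth _ hg3 hAg hBg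
      have hdh0 : h.natDegree = 0 := by omega
      exact hhU (hunit h hhu hdh0)
    · -- A ∣ g, B ∣ h : deg g = 3, contradiction with mod 2
      have h1 := natDegree_le_of_dvd hAg hg3
      have h2 := natDegree_le_of_dvd hBh hh3
      omega
    · -- B ∣ g, A ∣ h : deg g = 4, contradiction with mod 2
      have h1 := natDegree_le_of_dvd hBg hg3
      have h2 := natDegree_le_of_dvd hAh hh3
      omega
    · -- A, B ∣ h : h has degree 7, g is a unit
      have := hboth _ hh3 hAh hBh
      have hdg0 : g.natDegree = 0 := by omega
      exact hgU (hunit g hgu hdg0)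

theorem irreducible_f7 : Irreducible (X ^ 7 + 7 * X ^ 4 - X + 7 : Polynomial ℚ) := by
  have hm : (X ^ 7 + 7 * X ^ 4 - X + 7 : ℤ[X]).Monic := by monicity!
  have hmap : (X ^ 7 + 7 * X ^ 4 - X + 7 : Polynomial ℚ)
      = (X ^ 7 + 7 * X ^ 4 - X + 7 : ℤ[X]).map (algebraMap ℤ ℚ) := by
    simp only [Polynomial.map_add, Polynomial.map_sub, Polynomial.map_mul, Polynomial.map_pow,
      Polynomial.map_ofNat, Polynomial.map_X]
  rw [hmap]
  exact (hm.irreducible_iff_irreducible_map_fraction_map).mp irredFZ
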